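/- Let M : ℕ × ℕ → ℂ be an infinite matrix all of whose rows and all of whose columns are square-summable. Then M defines a bounded operator on ℓ²(ℕ) if and only if sup_{n∈ℕ} ‖Pₙ M Pₙ‖ < ∞. Moreover, when M defines a bounded operator T on ℓ²(ℕ), one has ‖T‖ = sup_{n∈ℕ} ‖Pₙ M Pₙ‖. -/

import Mathlib

open Filter Topology
open scoped ENNReal

noncomputable section

/-- `M` defines the bounded operator `T` on `ℓ²(ℕ)`: for every `x ∈ ℓ²(ℕ)` and every `j`,
`(T x)(j) = ∑_k M(j,k) x(k)`, the series converging absolutely. -/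
def RepresentsMatrix (M : ℕ → ℕ → ℂ)
    (T : lp (fun _ : ℕ => ℂ) 2 →L[ℂ] lp (fun _ : ℕ => ℂ) 2) : Prop :=
  ∀ (x : lp (fun _ : ℕ => ℂ) 2) (j : ℕ),
    Summable (fun k => ‖M j k * x k‖) ∧ T x j = ∑' k, M j k * x k

/-- The operator norm `‖Pₙ A Pₙ‖` of the compression of the infinite matrix `A` to the span of
`e_0, …, e_n`, computed as the operator norm of the corresponding `(n+1) × (n+1)` matrix acting
on Euclidean space. -/
def truncNorm (A : ℕ → ℕ → ℂ) (n : ℕ) : ℝ :=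
  ‖Matrix.toEuclideanCLM (𝕜 := ℂ) (Matrix.of fun i j : Fin (n + 1) => A i j)‖

lemma two_toReal : (2 : ℝ≥0∞).toReal = 2 := by norm_num

lemma rpow_two_eq (a : ℝ) (ha : 0 ≤ a) : a ^ (2:ℝ) = a ^ 2 := by
  rw [show (2:ℝ) = ((2:ℕ):ℝ) by norm_num, Real.rpow_natCast]

lemma lp_sq_summable (x : lp (fun _ : ℕ => ℂ) 2) : Summable fun k => ‖x k‖ ^ 2 := by
  have := (lp.memℓp x).summable (p := 2) (by rw [two_toReal]; norm_num)
  rw [two_toReal] at this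
  refine this.congr fun k => rpow_two_eq _ (norm_nonneg _)

lemma lp_sum_sq_le (x : lp (fun _ : ℕ => ℂ) 2) (s : Finset ℕ) :
    ∑ k ∈ s, ‖x k‖ ^ 2 ≤ ‖x‖ ^ 2 := by
  have := lp.sum_rpow_le_norm_rpow (p := 2) (by rw [two_toReal]; norm_num) x s
  rw [two_toReal] at this
  calc ∑ k ∈ s, ‖x k‖ ^ 2 = ∑ k ∈ s, ‖x k‖ ^ (2:ℝ) := by
        exact Finset.sum_congr rfl fun k _ => (rpow_two_eq _ (norm_nonneg _)).symm
    _ ≤ ‖x‖ ^ (2:ℝ) := this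
    _ = ‖x‖ ^ 2 := rpow_two_eq _ (norm_nonneg _)

lemma row_summable (M : ℕ → ℕ → ℂ) (hrow : ∀ j, Summable fun k => ‖M j k‖ ^ 2)
    (x : lp (fun _ : ℕ => ℂ) 2) (j : ℕ) : Summable fun k => ‖M j k * x k‖ := by
  have h := (hrow j).add (lp_sq_summable x)
  refine Summable.of_nonneg_of_le (fun k => norm_nonneg _)
    (fun k => ?_) (h.div_const 2)
  rw [norm_mul]
  nlinarith [sq_nonneg (‖M j k‖ - ‖x k‖), norm_nonneg (M j k), norm_nonneg (x k)]

lemma clm_apply (n : ℕ) (A : Matrix (Fin n) (Fin n) ℂ) (v : EuclideanSpace ℂ (Fin n)) (i : Fin n) :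
    (Matrix.toEuclideanCLM (𝕜 := ℂ) A v) i = ∑ j, A i j * v j := by
  have : (Matrix.toEuclideanCLM (𝕜 := ℂ) A v)
      = (WithLp.equiv _ _).symm (Matrix.toLin' A (WithLp.equiv _ _ v)) := rfl
  rw [this]
  simp [Matrix.toLin'_apply, Matrix.mulVec, dotProduct]

lemma euclid_norm_sq (n : ℕ) (v : EuclideanSpace ℂ (Fin n)) : ‖v‖ ^ 2 = ∑ i, ‖v i‖ ^ 2 := by
  rw [EuclideanSpace.norm_eq, Real.sq_sqrt]
  positivity


lemma truncNorm_nonneg (A : ℕ → ℕ → ℂ) (n : ℕ) : 0 ≤ truncNorm A n := norm_nonneg _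

lemma key_estimate (M : ℕ → ℕ → ℂ) (hrow : ∀ j, Summable fun k => ‖M j k‖ ^ 2) {C : ℝ}
    (hC : ∀ n, truncNorm M n ≤ C) (x : lp (fun _ : ℕ => ℂ) 2) (s : Finset ℕ) :
    ∑ j ∈ s, ‖∑' k, M j k * x k‖ ^ 2 ≤ C ^ 2 * ‖x‖ ^ 2 := by
  have hC0 : 0 ≤ C := (truncNorm_nonneg M 0).trans (hC 0)
  have hsum : ∀ j, Summable fun k => M j k * x k :=
    fun j => (row_summable M hrow x j).of_norm
  have htend : Tendsto (fun m => ∑ j ∈ s, ‖∑ k ∈ Finset.range m, M j k * x k‖ ^ 2)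
      atTop (𝓝 (∑ j ∈ s, ‖∑' k, M j k * x k‖ ^ 2)) := by
    refine tendsto_finset_sum s fun j _ => ?_
    exact (((hsum j).hasSum.tendsto_sum_nat).norm).pow 2
  refine le_of_tendsto htend (Filter.Eventually.of_forall fun m => ?_)
  set N := max (s.sup id) m with hN
  set A : Matrix (Fin (N+1)) (Fin (N+1)) ℂ := Matrix.of fun i j : Fin (N+1) => M i j with hA
  set v : EuclideanSpace ℂ (Fin (N+1)) := WithLp.toLp 2 (fun k => if (k : ℕ) < m then x k else 0) with hv
  have hmN : m ≤ N + 1 := le_trans (le_max_right _ _) (Nat.le_succ N)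
  have hfilter : (Finset.range (N+1)).filter (· < m) = Finset.range m := by
    ext k; simp only [Finset.mem_filter, Finset.mem_range]; omega
  have happ : ∀ i : Fin (N+1),
      (Matrix.toEuclideanCLM (𝕜 := ℂ) A v) i = ∑ k ∈ Finset.range m, M i k * x k := by
    intro i
    rw [clm_apply]
    have : ∀ k : Fin (N+1), A i k * v k
        = (fun kk : ℕ => if kk < m then M i kk * x kk else 0) (k : ℕ) := by
      intro k
      simp only [hA, hv, PiLp.toLp_apply, Matrix.of_apply, mul_ite, mul_zero]
    rw [Finset.sum_congr rfl fun k _ => this k,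
      Fin.sum_univ_eq_sum_range (fun kk : ℕ => if kk < m then M i kk * x kk else 0) (N+1),
      ← hfilter, Finset.sum_filter]
  have hsub : s ⊆ Finset.range (N+1) := by
    intro j hj
    have : j ≤ s.sup id := Finset.le_sup (f := id) hj
    simp only [Finset.mem_range]; omega
  have step1 : ∑ j ∈ s, ‖∑ k ∈ Finset.range m, M j k * x k‖ ^ 2
      ≤ ‖Matrix.toEuclideanCLM (𝕜 := ℂ) A v‖ ^ 2 := by
    rw [euclid_norm_sq]
    have : ∑ i : Fin (N+1), ‖(Matrix.toEuclideanCLM (𝕜 := ℂ) A v) i‖ ^ 2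
        = ∑ j ∈ Finset.range (N+1), ‖∑ k ∈ Finset.range m, M j k * x k‖ ^ 2 := by
      rw [Finset.sum_congr rfl fun i _ => by rw [happ i]]
      exact Fin.sum_univ_eq_sum_range (fun j => ‖∑ k ∈ Finset.range m, M j k * x k‖ ^ 2) (N+1)
    rw [this]
    exact Finset.sum_le_sum_of_subset_of_nonneg hsub fun _ _ _ => by positivity
  have hvle : ‖v‖ ^ 2 ≤ ‖x‖ ^ 2 := by
    rw [euclid_norm_sq]
    have : ∀ k : Fin (N+1), ‖v k‖ ^ 2
        = (fun kk : ℕ => if kk < m then ‖x kk‖ ^ 2 else 0) (k : ℕ) := by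
      intro k
      simp only [hv, PiLp.toLp_apply, apply_ite (fun z : ℂ => ‖z‖ ^ 2), norm_zero]
      norm_num
    rw [Finset.sum_congr rfl fun k _ => this k,
      Fin.sum_univ_eq_sum_range (fun kk : ℕ => if kk < m then ‖x kk‖ ^ 2 else 0) (N+1),
      ← Finset.sum_filter, hfilter]
    exact lp_sum_sq_le x _
  have step2 : ‖Matrix.toEuclideanCLM (𝕜 := ℂ) A v‖ ^ 2 ≤ C ^ 2 * ‖x‖ ^ 2 := by
    have h1 : ‖Matrix.toEuclideanCLM (𝕜 := ℂ) A v‖ ≤ truncNorm M N * ‖v‖ :=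
      (Matrix.toEuclideanCLM (𝕜 := ℂ) A).le_opNorm v
    have h3 : ‖Matrix.toEuclideanCLM (𝕜 := ℂ) A v‖ ≤ C * ‖v‖ :=
      h1.trans (mul_le_mul_of_nonneg_right (hC N) (norm_nonneg v))
    have h4 : ‖Matrix.toEuclideanCLM (𝕜 := ℂ) A v‖ ^ 2 ≤ (C * ‖v‖) ^ 2 :=
      pow_le_pow_left₀ (norm_nonneg _) h3 2
    have h5 : C ^ 2 * ‖v‖ ^ 2 ≤ C ^ 2 * ‖x‖ ^ 2 :=
      mul_le_mul_of_nonneg_left hvle (sq_nonneg C)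
    calc ‖Matrix.toEuclideanCLM (𝕜 := ℂ) A v‖ ^ 2 ≤ (C * ‖v‖) ^ 2 := h4
      _ = C ^ 2 * ‖v‖ ^ 2 := by ring
      _ ≤ C ^ 2 * ‖x‖ ^ 2 := h5
  linarith

lemma sqle (a b : ℝ) (ha : 0 ≤ a) (hb : 0 ≤ b) (h : a ^ 2 ≤ b ^ 2) : a ≤ b := by nlinarith

lemma lp_norm_sq (x : lp (fun _ : ℕ => ℂ) 2) : ‖x‖ ^ 2 = ∑' k, ‖x k‖ ^ 2 := by
  have := lp.norm_rpow_eq_tsum (p := 2) (by rw [two_toReal]; norm_num) x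
  rw [two_toReal] at this
  rw [rpow_two_eq _ (norm_nonneg _)] at this
  rw [this]
  exact tsum_congr fun k => rpow_two_eq _ (norm_nonneg _)

lemma trunc_le_opNorm (M : ℕ → ℕ → ℂ)
    (T : lp (fun _ : ℕ => ℂ) 2 →L[ℂ] lp (fun _ : ℕ => ℂ) 2)
    (hT : RepresentsMatrix M T) (n : ℕ) : truncNorm M n ≤ ‖T‖ := by
  refine ContinuousLinearMap.opNorm_le_bound _ (norm_nonneg T) fun v => ?_
  set A : Matrix (Fin (n+1)) (Fin (n+1)) ℂ := Matrix.of fun i j : Fin (n+1) => M i j with hA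
  set xf : ℕ → ℂ := fun k => if h : k < n+1 then v ⟨k, h⟩ else 0 with hxf
  have hxf0 : ∀ k ∉ Finset.range (n+1), xf k = 0 := by
    intro k hk
    simp only [Finset.mem_range, not_lt] at hk
    exact dif_neg (by omega)
  have hxmem : Memℓp xf 2 := by
    apply memℓp_gen
    apply summable_of_ne_finset_zero (s := Finset.range (n+1))
    intro k hk
    rw [hxf0 k hk, norm_zero, Real.zero_rpow (by rw [two_toReal]; norm_num)]
  set x : lp (fun _ : ℕ => ℂ) 2 := ⟨xf, hxmem⟩ with hx
  have hxa : ∀ k, (x : ℕ → ℂ) k = xf k := fun k => rfl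
  have hxv : ∀ k : Fin (n+1), xf (k : ℕ) = v k := by
    intro k
    exact dif_pos k.isLt
  -- T x agrees with the matrix action on coordinates < n+1
  have hTx : ∀ i : Fin (n+1), T x (i : ℕ) = (Matrix.toEuclideanCLM (𝕜 := ℂ) A v) i := by
    intro i
    rw [(hT x i).2, clm_apply]
    rw [tsum_eq_sum (s := Finset.range (n+1))
      (fun k hk => by rw [hxa, hxf0 k hk, mul_zero])]
    rw [← Fin.sum_univ_eq_sum_range (fun kk => M i kk * x kk) (n+1)]
    refine Finset.sum_congr rfl fun k _ => ?_
    rw [hxa, hxv k, hA]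
    rfl
  -- norm of x equals norm of v
  have hxnorm : ‖x‖ ^ 2 = ‖v‖ ^ 2 := by
    rw [lp_norm_sq, euclid_norm_sq]
    rw [tsum_eq_sum (s := Finset.range (n+1))
      (fun k hk => by rw [hxa, hxf0 k hk, norm_zero]; norm_num)]
    rw [← Fin.sum_univ_eq_sum_range (fun kk => ‖x kk‖ ^ 2) (n+1)]
    exact Finset.sum_congr rfl fun k _ => by rw [hxa, hxv k]
  refine sqle _ _ (norm_nonneg _) (by positivity) ?_
  have h1 : ‖Matrix.toEuclideanCLM (𝕜 := ℂ) A v‖ ^ 2 = ∑ i : Fin (n+1), ‖T x (i : ℕ)‖ ^ 2 := by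
    rw [euclid_norm_sq]
    exact Finset.sum_congr rfl fun i _ => by rw [hTx i]
  have h2 : ∑ i : Fin (n+1), ‖T x (i : ℕ)‖ ^ 2 ≤ ‖T x‖ ^ 2 := by
    rw [Fin.sum_univ_eq_sum_range (fun j => ‖T x j‖ ^ 2) (n+1)]
    exact lp_sum_sq_le (T x) _
  have h3 : ‖T x‖ ^ 2 ≤ (‖T‖ * ‖x‖) ^ 2 :=
    pow_le_pow_left₀ (norm_nonneg _) (T.le_opNorm x) 2
  calc ‖Matrix.toEuclideanCLM (𝕜 := ℂ) A v‖ ^ 2 = ∑ i : Fin (n+1), ‖T x (i : ℕ)‖ ^ 2 := h1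
    _ ≤ ‖T x‖ ^ 2 := h2
    _ ≤ (‖T‖ * ‖x‖) ^ 2 := h3
    _ = ‖T‖ ^ 2 * ‖x‖ ^ 2 := by ring
    _ = ‖T‖ ^ 2 * ‖v‖ ^ 2 := by rw [hxnorm]
    _ = (‖T‖ * ‖v‖) ^ 2 := by ring

lemma sum_rpow_est (M : ℕ → ℕ → ℂ) (hrow : ∀ j, Summable fun k => ‖M j k‖ ^ 2) {C : ℝ}
    (hC : ∀ n, truncNorm M n ≤ C) (x : lp (fun _ : ℕ => ℂ) 2) (s : Finset ℕ) :
    ∑ j ∈ s, ‖∑' k, M j k * x k‖ ^ (2:ℝ≥0∞).toReal ≤ (C * ‖x‖) ^ (2:ℝ≥0∞).toReal := by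
  have hC0 : 0 ≤ C := (truncNorm_nonneg M 0).trans (hC 0)
  rw [two_toReal, rpow_two_eq _ (mul_nonneg hC0 (norm_nonneg x))]
  calc ∑ j ∈ s, ‖∑' k, M j k * x k‖ ^ (2:ℝ)
      = ∑ j ∈ s, ‖∑' k, M j k * x k‖ ^ 2 :=
        Finset.sum_congr rfl fun j _ => rpow_two_eq _ (norm_nonneg _)
    _ ≤ C ^ 2 * ‖x‖ ^ 2 := key_estimate M hrow hC x s
    _ = (C * ‖x‖) ^ 2 := by ring

lemma exists_rep (M : ℕ → ℕ → ℂ) (hrow : ∀ j, Summable fun k => ‖M j k‖ ^ 2) {C : ℝ}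
    (hC : ∀ n, truncNorm M n ≤ C) : ∃ T, RepresentsMatrix M T := by
  have hC0 : 0 ≤ C := (truncNorm_nonneg M 0).trans (hC 0)
  have hmem : ∀ x : lp (fun _ : ℕ => ℂ) 2, Memℓp (fun j => ∑' k, M j k * x k) 2 := by
    intro x
    exact memℓp_gen' (C := (C * ‖x‖) ^ (2:ℝ≥0∞).toReal) (sum_rpow_est M hrow hC x)
  set Tl : lp (fun _ : ℕ => ℂ) 2 →ₗ[ℂ] lp (fun _ : ℕ => ℂ) 2 :=
    { toFun := fun x => ⟨fun j => ∑' k, M j k * x k, hmem x⟩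
      map_add' := by
        intro x y
        apply Subtype.ext
        funext j
        have hx := (row_summable M hrow x j).of_norm
        have hy := (row_summable M hrow y j).of_norm
        show ∑' k, M j k * (x + y) k = (∑' k, M j k * x k) + ∑' k, M j k * y k
        rw [← Summable.tsum_add hx hy]
        refine tsum_congr fun k => ?_
        rw [lp.coeFn_add x y]
        simp [mul_add]
      map_smul' := by
        intro c x
        apply Subtype.ext
        funext j
        show ∑' k, M j k * (c • x) k = c • ∑' k, M j k * x k
        rw [smul_eq_mul, ← tsum_mul_left]
        refine tsum_congr fun k => ?_
        rw [lp.coeFn_smul c x]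
        simp
        ring } with hTl
  have hbound : ∀ x, ‖Tl x‖ ≤ C * ‖x‖ := by
    intro x
    refine lp.norm_le_of_forall_sum_le (by rw [two_toReal]; norm_num)
      (mul_nonneg hC0 (norm_nonneg x)) fun s => ?_
    exact sum_rpow_est M hrow hC x s
  refine ⟨Tl.mkContinuous C hbound, fun x j => ⟨row_summable M hrow x j, rfl⟩⟩

lemma opNorm_le_of_bound (M : ℕ → ℕ → ℂ) (hrow : ∀ j, Summable fun k => ‖M j k‖ ^ 2) {C : ℝ}
    (hC : ∀ n, truncNorm M n ≤ C)
    (T : lp (fun _ : ℕ => ℂ) 2 →L[ℂ] lp (fun _ : ℕ => ℂ) 2)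
    (hT : RepresentsMatrix M T) : ‖T‖ ≤ C := by
  have hC0 : 0 ≤ C := (truncNorm_nonneg M 0).trans (hC 0)
  refine T.opNorm_le_bound hC0 fun x => ?_
  refine lp.norm_le_of_forall_sum_le (by rw [two_toReal]; norm_num)
    (mul_nonneg hC0 (norm_nonneg x)) fun s => ?_
  have := sum_rpow_est M hrow hC x s
  refine le_trans (le_of_eq ?_) this
  exact Finset.sum_congr rfl fun j _ => by rw [(hT x j).2]

/-- Lemma 5.3: an infinite matrix with square-summable rows and columns defines a bounded
operator on `ℓ²(ℕ)` iff `sup_n ‖Pₙ M Pₙ‖ < ∞`, in which case `‖T‖ = sup_n ‖Pₙ M Pₙ‖`. -/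
theorem matrix_bounded_iff_sup_truncations_lt_top (M : ℕ → ℕ → ℂ)
    (hrow : ∀ j, Summable fun k => ‖M j k‖ ^ 2)
    (hcol : ∀ k, Summable fun j => ‖M j k‖ ^ 2) :
    ((∃ T, RepresentsMatrix M T) ↔ BddAbove (Set.range fun n => truncNorm M n)) ∧
      ∀ T, RepresentsMatrix M T → ‖T‖ = ⨆ n, truncNorm M n := by
  constructor
  · constructor
    · rintro ⟨T, hT⟩
      refine ⟨‖T‖, ?_⟩
      rintro r ⟨n, rfl⟩
      exact trunc_le_opNorm M T hT n
    · rintro ⟨C, hC⟩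
      exact exists_rep M hrow fun n => hC ⟨n, rfl⟩
  · intro T hT
    have hbdd : BddAbove (Set.range fun n => truncNorm M n) := by
      refine ⟨‖T‖, ?_⟩
      rintro r ⟨n, rfl⟩
      exact trunc_le_opNorm M T hT n
    refine le_antisymm ?_ ?_
    · exact opNorm_le_of_bound M hrow (fun n => le_ciSup hbdd n) T hT
    · exact ciSup_le fun n => trunc_le_opNorm M T hT n
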